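/- For every even integer n ≥ 4 and every integer k with 0 ≤ k ≤ n/2 − 2, the following inequality of real numbers holds: Π_{i=k+1}^{n/2−1} (1 + e·n/(i·(n/2 − i)!))^{−1} ≥ exp(−4e·(e − 1 + 1/(⌊n/4⌋)!)). -/

import Mathlib

open Finset

lemma geom_aux {r : ℝ} (h0 : 0 ≤ r) (h1 : r < 1) (N : ℕ) :
    ∑ i ∈ range N, r ^ i ≤ (1 - r)⁻¹ := by
  have h2 : (0:ℝ) < 1 - r := by linarith
  rw [geom_sum_eq h1.ne N]
  calc (r ^ N - 1) / (r - 1) = (1 - r ^ N) / (1 - r) := by rw [← neg_div_neg_eq]; ring_nf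
    _ ≤ 1 / (1 - r) := by gcongr; nlinarith [pow_nonneg h0 N]
    _ = (1 - r)⁻¹ := one_div _

lemma partB_nat (m q c i : ℕ) (hq : q = m / 2) (hc : c = m - q) (hm : 2 ≤ m)
    (hi1 : 1 ≤ i) (hic : i < c) :
    m * (2 * q - 1) * (q.factorial * (q + 1) ^ (c - 1 - i)) ≤ 2 * q * (i * (m - i).factorial) := by
  have hq1 : 1 ≤ q := by omega
  have e1 : q.factorial * (q + 1) ^ (c - 1 - i) ≤ (m - 1 - i).factorial := by
    have h := Nat.factorial_mul_pow_le_factorial (m := q) (n := m - 1 - i - q)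
    have h2 : q + (m - 1 - i - q) = m - 1 - i := by omega
    have h3 : m - 1 - i - q = c - 1 - i := by omega
    rwa [h2, h3] at h
  have e2 : (m - 1) * (m - 1 - i).factorial ≤ i * (m - i).factorial := by
    have hfs : (m - i).factorial = (m - i) * (m - 1 - i).factorial := by
      have : m - i = (m - 1 - i) + 1 := by omega
      rw [this, Nat.factorial_succ]
    have key : m - 1 ≤ i * (m - i) := by
      obtain ⟨a, ha⟩ : ∃ a, i = a + 1 := ⟨i - 1, by omega⟩
      obtain ⟨b, hb⟩ : ∃ b, m - i = b + 1 := ⟨m - i - 1, by omega⟩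
      have hs : m - 1 = a + b + 1 := by omega
      have hp : (a + 1) * (b + 1) = a * b + a + b + 1 := by ring
      rw [hb, ha, hs]; omega
    calc (m - 1) * (m - 1 - i).factorial ≤ (i * (m - i)) * (m - 1 - i).factorial :=
          Nat.mul_le_mul_right _ key
      _ = i * (m - i).factorial := by rw [hfs]; ring
  calc m * (2 * q - 1) * (q.factorial * (q + 1) ^ (c - 1 - i))
      ≤ m * (2 * q - 1) * (m - 1 - i).factorial := Nat.mul_le_mul_left _ e1
    _ ≤ (2 * q * (m - 1)) * (m - 1 - i).factorial := by
        apply Nat.mul_le_mul_right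
        have h2q : 2 * q ≤ m := by omega
        have hcomm : m * (2 * q) = 2 * q * m := by ring
        calc m * (2 * q - 1) = m * (2 * q) - m * 1 := by rw [Nat.mul_sub]
          _ ≤ 2 * q * (m - 1) := by
              rw [Nat.mul_sub, hcomm]; simp only [Nat.mul_one]; omega
    _ = 2 * q * ((m - 1) * (m - 1 - i).factorial) := by ring
    _ ≤ 2 * q * (i * (m - i).factorial) := Nat.mul_le_mul_left _ e2

set_option maxHeartbeats 1000000 in
theorem product_bound (n k : ℕ) (hn : 4 ≤ n) (hev : Even n) (hk : k ≤ n / 2 - 2) :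
    Real.exp (-(4 * Real.exp 1 * (Real.exp 1 - 1 + 1 / ((n / 4).factorial : ℝ)))) ≤
      ∏ i ∈ Finset.Icc (k + 1) (n / 2 - 1),
        (1 + Real.exp 1 * (n : ℝ) / ((i : ℝ) * ((n / 2 - i).factorial : ℝ)))⁻¹ := by
  obtain ⟨t, ht⟩ := hev
  set m := n / 2 with hm
  set q := m / 2 with hq
  have hm2 : 2 ≤ m := by omega
  have hq1 : 1 ≤ q := by omega
  have hn4 : n / 4 = q := by omega
  have hn2m : n = 2 * m := by omega
  set c := m - q with hc
  set x : ℕ → ℝ := fun i => Real.exp 1 * (n : ℝ) / ((i : ℝ) * ((m - i).factorial : ℝ)) with hx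
  have hx0 : ∀ i, 0 ≤ x i := by
    intro i
    apply div_nonneg (mul_nonneg (Real.exp_pos 1).le (Nat.cast_nonneg n))
    positivity
  have hfact : ∀ j : ℕ, (0:ℝ) < (j.factorial : ℝ) := fun j => by
    exact_mod_cast j.factorial_pos
  have he : (0:ℝ) < Real.exp 1 := Real.exp_pos 1
  rw [hn4]
  -- Step 1: product ≥ exp of minus sum
  have h1 : Real.exp (-(∑ i ∈ Icc (k+1) (m-1), x i)) ≤
      ∏ i ∈ Icc (k+1) (m-1), (1 + x i)⁻¹ := by
    rw [← Finset.sum_neg_distrib, Real.exp_sum]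
    apply Finset.prod_le_prod (fun i _ => (Real.exp_pos _).le)
    intro i _
    rw [Real.exp_neg]
    apply inv_anti₀ (by positivity)
    linarith [Real.add_one_le_exp (x i)]
  refine le_trans (Real.exp_le_exp.mpr (neg_le_neg ?_)) h1
  -- Step 2: bound the sum
  have hsub : ∑ i ∈ Icc (k+1) (m-1), x i ≤ ∑ i ∈ Ico 1 m, x i := by
    apply Finset.sum_le_sum_of_subset_of_nonneg _ (fun i _ _ => hx0 i)
    intro i hi
    simp only [mem_Icc, mem_Ico] at *
    omega
  have hsplit : (∑ i ∈ Ico 1 c, x i) + ∑ i ∈ Ico c m, x i = ∑ i ∈ Ico 1 m, x i :=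
    Finset.sum_Ico_consecutive _ (by omega) (by omega)
  have hA : ∑ i ∈ Ico c m, x i ≤ 4 * Real.exp 1 * (Real.exp 1 - 1) := by
    calc ∑ i ∈ Ico c m, x i
        ≤ ∑ i ∈ Ico c m, 4 * Real.exp 1 * (1 / (((m - i).factorial : ℝ))) := by
          apply Finset.sum_le_sum
          intro i hi
          simp only [mem_Ico] at hi
          have hi1 : 1 ≤ i := by omega
          have hip : (0:ℝ) < (i:ℝ) := by exact_mod_cast hi1
          have hni : (n:ℝ) ≤ 4 * (i:ℝ) := by
            have : n ≤ 4 * i := by omega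
            exact_mod_cast this
          rw [hx, mul_one_div, div_le_div_iff₀ (by positivity) (hfact _)]
          nlinarith [hfact (m - i), mul_le_mul_of_nonneg_left hni he.le]
      _ = ∑ j ∈ Icc 1 q, 4 * Real.exp 1 * (1 / ((j.factorial : ℝ))) := by
          apply Finset.sum_nbij' (fun i => m - i) (fun j => m - j)
          · intro a ha; simp only [mem_Ico, mem_Icc] at *; omega
          · intro a ha; simp only [mem_Ico, mem_Icc] at *; omega
          · intro a ha; simp only [mem_Ico] at ha; omega
          · intro a ha; simp only [mem_Icc] at ha; omega
          · intro a ha; rfl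
      _ = 4 * Real.exp 1 * ∑ j ∈ Icc 1 q, (1 / ((j.factorial : ℝ))) := by
          rw [Finset.mul_sum]
      _ ≤ 4 * Real.exp 1 * (Real.exp 1 - 1) := by
          have hs : ∑ j ∈ Icc 1 q, (1 / ((j.factorial : ℝ))) ≤ Real.exp 1 - 1 := by
            have h := Real.sum_le_exp_of_nonneg (by norm_num : (0:ℝ) ≤ 1) (q + 1)
            simp only [one_pow, one_div] at h
            rw [Finset.range_eq_Ico, Finset.sum_eq_sum_Ico_succ_bot (by omega)] at h
            rw [Finset.Ico_add_one_right_eq_Icc] at h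
            simp only [Nat.factorial_zero, Nat.cast_one, one_div] at h ⊢
            have : (1:ℝ)⁻¹ = 1 := by norm_num
            rw [this] at h
            linarith
          nlinarith [hs]
  have hB : ∑ i ∈ Ico 1 c, x i ≤ 4 * Real.exp 1 * (1 / (q.factorial : ℝ)) := by
    rcases Nat.lt_or_ge m 4 with h4 | h4
    · rcases (by omega : m = 2 ∨ m = 3) with h | h
      · have : c = 1 := by omega
        rw [this]
        simp only [Finset.Ico_self, Finset.sum_empty]
        positivity
      · have hc2 : c = 2 := by omega
        have hq' : q = 1 := by omega
        have hn6 : n = 6 := by omega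
        rw [hc2, show Ico 1 2 = {1} from rfl, Finset.sum_singleton, hx, hq', hn6, h]
        norm_num [Nat.factorial]
        nlinarith [he]
    · have hq2 : 2 ≤ q := by omega
      set r : ℝ := ((q:ℝ) + 1)⁻¹ with hr
      have hr0 : 0 ≤ r := by positivity
      have hr1 : r < 1 := by
        rw [hr, inv_lt_one_iff₀]
        right
        have : (1:ℝ) ≤ (q:ℝ) := by exact_mod_cast hq1
        linarith
      set K : ℝ := 4 * Real.exp 1 * (q:ℝ) / (((2 * q - 1 : ℕ) : ℝ) * (q.factorial : ℝ)) with hK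
      have h2q1 : (0:ℝ) < ((2 * q - 1 : ℕ) : ℝ) := by
        have : 1 ≤ 2 * q - 1 := by omega
        exact_mod_cast Nat.lt_of_lt_of_le Nat.zero_lt_one this
      have hK0 : 0 ≤ K := by
        rw [hK]; positivity
      calc ∑ i ∈ Ico 1 c, x i ≤ ∑ i ∈ Ico 1 c, K * r ^ (c - 1 - i) := by
            apply Finset.sum_le_sum
            intro i hi
            simp only [mem_Ico] at hi
            have hi1 : 1 ≤ i := hi.1
            have hip : (0:ℝ) < (i:ℝ) := by exact_mod_cast hi1
            have hnat := partB_nat m q c i hq hc hm2 hi.1 hi.2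
            have hcast : ((m * (2 * q - 1) * (q.factorial * (q + 1) ^ (c - 1 - i)) : ℕ) : ℝ)
                ≤ ((2 * q * (i * (m - i).factorial) : ℕ) : ℝ) := by exact_mod_cast hnat
            have hRHS : K * r ^ (c - 1 - i) =
                4 * Real.exp 1 * (q:ℝ) /
                  (((2 * q - 1 : ℕ) : ℝ) * (q.factorial : ℝ) * ((q:ℝ) + 1) ^ (c - 1 - i)) := by
              rw [hK, hr, inv_pow]
              field_simp
            rw [hx, hRHS]
            have hcast2 : (m:ℝ) * ((2 * q - 1 : ℕ) : ℝ) *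
                ((q.factorial : ℝ) * ((q:ℝ) + 1) ^ (c - 1 - i))
                ≤ 2 * (q:ℝ) * ((i:ℝ) * ((m - i).factorial : ℝ)) := by
              exact_mod_cast hcast
            have hnc : (n:ℝ) = 2 * (m:ℝ) := by exact_mod_cast hn2m
            rw [div_le_div_iff₀ (by positivity) (by positivity), hnc]
            linarith [mul_le_mul_of_nonneg_left hcast2
              (by positivity : (0:ℝ) ≤ 2 * Real.exp 1)]
        _ = K * ∑ i ∈ Ico 1 c, r ^ (c - 1 - i) := by rw [Finset.mul_sum]
        _ = K * ∑ j ∈ range (c - 1), r ^ j := by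
            congr 1
            apply Finset.sum_nbij' (fun i => c - 1 - i) (fun j => c - 1 - j)
            · intro a ha; simp only [mem_Ico, mem_range] at *; omega
            · intro a ha; simp only [mem_range, mem_Ico] at *; omega
            · intro a ha; simp only [mem_Ico] at ha; omega
            · intro a ha; simp only [mem_range] at ha; omega
            · intro a ha; rfl
        _ ≤ K * (1 - r)⁻¹ := mul_le_mul_of_nonneg_left (geom_aux hr0 hr1 _) hK0
        _ ≤ 4 * Real.exp 1 * (1 / (q.factorial : ℝ)) := by
            have hqpos : (0:ℝ) < (q:ℝ) := by exact_mod_cast hq1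
            have h1r : 1 - r = (q:ℝ) / ((q:ℝ) + 1) := by
              rw [hr]; field_simp; ring
            rw [hK, h1r]
            rw [inv_div, div_mul_div_comm, mul_one_div,
              div_le_div_iff₀ (by positivity) (by positivity)]
            have hcq : ((2 * q - 1 : ℕ) : ℝ) = 2 * (q:ℝ) - 1 := by
              push_cast [Nat.cast_sub (by omega : 1 ≤ 2 * q)]; ring
            rw [hcq]
            have hq2' : (2:ℝ) ≤ (q:ℝ) := by exact_mod_cast hq2
            have hle : (q:ℝ) + 1 ≤ 2 * (q:ℝ) - 1 := by linarith
            linarith [mul_le_mul_of_nonneg_left hle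
              (by positivity : (0:ℝ) ≤ 4 * Real.exp 1 * (q:ℝ) * (q.factorial : ℝ))]
  calc ∑ i ∈ Icc (k+1) (m-1), x i ≤ ∑ i ∈ Ico 1 m, x i := hsub
    _ = (∑ i ∈ Ico 1 c, x i) + ∑ i ∈ Ico c m, x i := hsplit.symm
    _ ≤ 4 * Real.exp 1 * (1 / (q.factorial : ℝ)) + 4 * Real.exp 1 * (Real.exp 1 - 1) :=
        add_le_add hB hA
    _ = 4 * Real.exp 1 * (Real.exp 1 - 1 + 1 / (q.factorial : ℝ)) := by ring
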